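/- Let A be an n×n Hermitian matrix with a zero eigenvalue, with corresponding unit eigenvector v (Av = 0). Then for any n×(n−1) matrix B: det(B* A B) = (−1)^{n−1} p_A'(0) · |det(B | v)|², where (B | v) is the n×n matrix whose first n−1 columns are B and last column is v. -/

import Mathlib

open Polynomial Matrix

/-- Cauchy-Binet type formula. -/
theorem cauchy_binet_type_formula {n : ℕ}
    (A : Matrix (Fin (n+1)) (Fin (n+1)) ℂ) (hA : A.IsHermitian)
    (v : Fin (n+1) → ℂ) (hv : A.mulVec v = 0)
    (hvu : dotProduct (star v) v = 1)
    (B : Matrix (Fin (n+1)) (Fin n) ℂ) :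
    (B.conjTranspose * A * B).det
      = (-1) ^ n * (Polynomial.derivative A.charpoly).eval 0 *
          (‖(Matrix.of fun i : Fin (n+1) => Fin.snoc (B i) (v i)).det‖ : ℂ) ^ 2 := by
  classical
  set M : Matrix (Fin (n+1)) (Fin (n+1)) ℂ :=
    Matrix.of (fun i : Fin (n+1) => Fin.snoc (B i) (v i)) with hMdef
  have hMc : ∀ i (k : Fin n), M i (Fin.castSucc k) = B i k := by
    intro i k; simp [hMdef]
  have hMl : ∀ i, M i (Fin.last n) = v i := by
    intro i; simp [hMdef]
  have hvA : (star v) ᵥ* A = 0 := by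
    have h := congrArg star hv
    rw [Matrix.star_mulVec, hA.eq] at h
    simpa using h
  set N : Matrix (Fin (n+1)) (Fin (n+1)) ℂ := Mᴴ * A * M with hN
  set S : Matrix (Fin (n+1)) (Fin (n+1)) ℂ := Mᴴ * M with hS
  have hNlastrow : ∀ j, N (Fin.last n) j = 0 := by
    intro j
    have h1 : N (Fin.last n) j = ((star v ᵥ* A) ᵥ* M) j := by
      simp only [hN, Matrix.mul_assoc, Matrix.mul_apply, Matrix.vecMul_vecMul,
        Matrix.vecMul, dotProduct, conjTranspose_apply, hMl, Pi.star_apply]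
      simp_rw [Finset.mul_sum, Finset.sum_mul, mul_assoc]
      rw [Finset.sum_comm]
    rw [h1, hvA]
    simp [Matrix.vecMul, dotProduct]
  have hNlastcol : ∀ i, N i (Fin.last n) = 0 := by
    intro i
    have h1 : N i (Fin.last n) = ((Mᴴ * A) *ᵥ v) i := by
      simp only [hN, Matrix.mul_apply, Matrix.mulVec, dotProduct, hMl]
    rw [h1, ← Matrix.mulVec_mulVec, hv]
    simp [Matrix.mulVec, dotProduct]
  have hSll : S (Fin.last n) (Fin.last n) = 1 := by
    simp only [hS, Matrix.mul_apply, conjTranspose_apply, hMl]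
    simpa [dotProduct] using hvu
  have hNblock : ∀ (k l : Fin n),
      N (Fin.castSucc k) (Fin.castSucc l) = (Bᴴ * A * B) k l := by
    intro k l
    simp only [hN, Matrix.mul_apply, conjTranspose_apply, hMc]
  -- polynomial matrices
  set D : Matrix (Fin (n+1)) (Fin (n+1)) ℂ[X] :=
    N.map C - (X : ℂ[X]) • S.map C with hD
  have hfact : D = (Mᴴ).map C * (A.map C - (X : ℂ[X]) • 1) * M.map C := by
    rw [Matrix.mul_sub, Matrix.sub_mul, hD, hN, hS, Matrix.map_mul, Matrix.map_mul,
      Matrix.map_mul, mul_smul_comm, mul_one, smul_mul_assoc]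
  set d : ℂ := M.det with hd
  -- first evaluation of det D
  have hQ : (A.map C - (X : ℂ[X]) • 1).det = (-1) ^ (n + 1) * A.charpoly := by
    have h1 : A.map C - (X : ℂ[X]) • 1 = -charmatrix A := by
      rw [charmatrix, neg_sub]
      congr 1
      ext i j
      simp [Matrix.scalar_apply, Matrix.smul_apply, Matrix.one_apply, Matrix.diagonal_apply,
        mul_ite, mul_one, mul_zero]
    rw [h1, Matrix.det_neg, Matrix.charpoly]
    simp
  have hdetD1 : D.det = C ((-1) ^ (n + 1) * (star d * d)) * A.charpoly := by
    rw [hfact, Matrix.det_mul, Matrix.det_mul, hQ]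
    rw [show ((Mᴴ).map ⇑C).det = C (Mᴴ.det) from (RingHom.map_det C Mᴴ).symm]
    rw [show ((M).map ⇑C).det = C (M.det) from (RingHom.map_det C M).symm]
    rw [Matrix.det_conjTranspose, ← hd]
    simp only [_root_.map_mul, _root_.map_neg, _root_.map_one, map_pow]
    ring
  -- second evaluation of det D
  set E : Matrix (Fin (n+1)) (Fin (n+1)) ℂ[X] :=
    D.updateRow (Fin.last n) (fun j => C (S (Fin.last n) j)) with hE
  have hDlast : D (Fin.last n) = (-X : ℂ[X]) • fun j => C (S (Fin.last n) j) := by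
    funext j
    simp only [hD, Matrix.sub_apply, Matrix.map_apply, Matrix.smul_apply, hNlastrow j,
      Pi.smul_apply, smul_eq_mul, map_zero]
    ring
  have hdetD2 : D.det = (-X : ℂ[X]) * E.det := by
    conv_lhs => rw [← Matrix.updateRow_eq_self D (Fin.last n), hDlast]
    rw [Matrix.det_updateRow_smul, hE]
  -- the derivative at 0, first way
  have hder1 : (derivative D.det).eval 0
      = (-1) ^ (n + 1) * (star d * d) * (derivative A.charpoly).eval 0 := by
    rw [hdetD1, derivative_C_mul]
    simp
  -- evaluate E at 0
  have hE0 : ((evalRingHom (0:ℂ)).mapMatrix E).det = (Bᴴ * A * B).det := by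
    set F : Matrix (Fin (n+1)) (Fin (n+1)) ℂ := (evalRingHom (0:ℂ)).mapMatrix E with hF
    have hFlast : ∀ j, F (Fin.last n) j = S (Fin.last n) j := by
      intro j
      simp [hF, hE, RingHom.mapMatrix_apply, Matrix.map_apply]
    have hFother : ∀ (i : Fin (n+1)), i ≠ Fin.last n → ∀ j, F i j = N i j := by
      intro i hi j
      simp [hF, hE, RingHom.mapMatrix_apply, Matrix.map_apply, Matrix.updateRow_ne hi, hD]
    have hFcol : ∀ i, F i (Fin.last n) = if i = Fin.last n then 1 else 0 := by
      intro i
      by_cases hi : i = Fin.last n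
      · subst hi; simp [hFlast, hSll]
      · simp [hi, hFother i hi, hNlastcol]
    have hexp := Matrix.det_succ_column F (Fin.last n)
    rw [hexp]
    rw [Finset.sum_eq_single (Fin.last n)]
    · rw [hFcol]
      simp only [if_pos rfl, Fin.succAbove_last, Fin.val_last]
      have hsub : F.submatrix Fin.castSucc Fin.castSucc = Bᴴ * A * B := by
        ext k l
        rw [Matrix.submatrix_apply, hFother _ (Fin.castSucc_lt_last k).ne]
        exact hNblock k l
      rw [hsub, ← two_mul, pow_mul]
      norm_num
    · intro i _ hi
      rw [hFcol, if_neg hi]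
      ring
    · intro h; exact absurd (Finset.mem_univ _) h
  -- the derivative at 0, second way
  have hder2 : (derivative D.det).eval 0 = -(Bᴴ * A * B).det := by
    rw [hdetD2, derivative_mul]
    simp only [derivative_neg, derivative_X, eval_add, eval_mul, eval_neg, eval_one, eval_X,
      neg_zero, zero_mul, mul_zero, add_zero, neg_mul, one_mul]
    have hmap := RingHom.map_det (evalRingHom (0:ℂ)) E
    simp only [coe_evalRingHom] at hmap
    rw [hmap, hE0]
  -- combine
  have key : -(Bᴴ * A * B).det
      = (-1) ^ (n + 1) * (star d * d) * (derivative A.charpoly).eval 0 := by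
    rw [← hder1, hder2]
  have hsd : star d * d = ((‖d‖ : ℝ) : ℂ) ^ 2 := by
    rw [Complex.star_def, mul_comm, Complex.mul_conj, Complex.normSq_eq_norm_sq]
    push_cast
    ring
  have : (Bᴴ * A * B).det = (-1) ^ n * (derivative A.charpoly).eval 0 * ((‖d‖ : ℝ) : ℂ) ^ 2 := by
    have := key
    rw [hsd] at this
    have h2 : (Bᴴ * A * B).det
        = -((-1) ^ (n + 1) * (((‖d‖ : ℝ) : ℂ) ^ 2) * (derivative A.charpoly).eval 0) := by
      rw [← this]; ring
    rw [h2]; ring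
  simpa [hd, hMdef] using this
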